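/- Let K be a complete nonarchimedean valued field and a = Σ_{k≥0} a_k x^k a nonzero element of the Tate algebra K⟨x⟩ (so |a_k| → 0), with Gauss norm ‖a‖ = max_k |a_k|. Let d be the largest index k with |a_k| = ‖a‖ (the Weierstrass degree of a). Then multiplication by a on K⟨x⟩ is injective and the quotient K⟨x⟩/(a) is a K-vector space of dimension exactly d. -/

import Mathlib

open Filter

section TateAux

set_option linter.unusedSectionVars false

open PowerSeries

variable {K : Type*} [NontriviallyNormedField K] [IsUltrametricDist K]

/-- coefficients tend to zero -/
private def TT (f : PowerSeries K) : Prop :=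
  Tendsto (fun n => ‖PowerSeries.coeff (R := K) n f‖) atTop (nhds 0)

private lemma tendsto_norm_lt {u : ℕ → ℝ} (hT : Tendsto u atTop (nhds 0)) (h0 : ∀ k, 0 ≤ u k)
    {ε : ℝ} (hε : 0 < ε) : ∃ N, ∀ k, N ≤ k → u k < ε := by
  obtain ⟨N, hN⟩ := Metric.tendsto_atTop.1 hT ε hε
  exact ⟨N, fun k hk => by
    have := hN k hk
    rwa [Real.dist_eq, sub_zero, abs_of_nonneg (h0 k)] at this⟩

private lemma last_argmax {u : ℕ → ℝ} (h0 : ∀ k, 0 ≤ u k) (hT : Tendsto u atTop (nhds 0))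
    (hne : ∃ m, u m ≠ 0) :
    ∃ p, 0 < u p ∧ (∀ k, u k ≤ u p) ∧ ∀ k, p < k → u k < u p := by
  obtain ⟨m, hm⟩ := hne
  have hm' : 0 < u m := lt_of_le_of_ne (h0 m) (Ne.symm hm)
  obtain ⟨N, hN'⟩ := tendsto_norm_lt hT h0 hm'
  have hmN : m < N := by
    by_contra h
    exact absurd (hN' m (le_of_not_gt h)) (lt_irrefl _)
  obtain ⟨b, hb, hbmax⟩ := Finset.exists_max_image (Finset.range N) u
    ⟨m, Finset.mem_range.2 hmN⟩
  have hglob : ∀ k, u k ≤ u b := by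
    intro k
    by_cases hk : k < N
    · exact hbmax k (Finset.mem_range.2 hk)
    · exact le_trans (le_of_lt (hN' k (le_of_not_gt hk))) (hbmax m (Finset.mem_range.2 hmN))
  have hbpos : 0 < u b := lt_of_lt_of_le hm' (hbmax m (Finset.mem_range.2 hmN))
  have hs2ne : ((Finset.range N).filter (fun k => u b ≤ u k)).Nonempty :=
    ⟨b, Finset.mem_filter.2 ⟨hb, le_refl _⟩⟩
  set s2 := (Finset.range N).filter (fun k => u b ≤ u k) with hs2
  set p := s2.max' hs2ne with hp
  have hps2 : p ∈ s2 := s2.max'_mem hs2ne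
  have hup : u p = u b := le_antisymm (hglob p) (Finset.mem_filter.1 hps2).2
  refine ⟨p, by rw [hup]; exact hbpos, by rw [hup]; exact hglob, ?_⟩
  intro k hk
  rcases lt_or_ge k N with h1 | h1
  · rcases lt_or_eq_of_le (hglob k) with h2 | h2
    · rwa [hup]
    · exfalso
      have hk2 : k ∈ s2 := Finset.mem_filter.2 ⟨Finset.mem_range.2 h1, le_of_eq h2.symm⟩
      exact absurd (s2.le_max' k hk2) (not_le.2 hk)
  · calc u k < u m := hN' k h1
      _ ≤ u b := hbmax m (Finset.mem_range.2 hmN)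
      _ = u p := hup.symm

private lemma TT.bound {f : PowerSeries K} (hf : TT f) :
    ∃ B, 0 < B ∧ ∀ k, ‖PowerSeries.coeff (R := K) k f‖ ≤ B := by
  obtain ⟨N, hN⟩ := tendsto_norm_lt hf (fun k => norm_nonneg _) one_pos
  obtain ⟨b, _, hbmax⟩ := Finset.exists_max_image (Finset.range (N + 1))
    (fun k => ‖PowerSeries.coeff (R := K) k f‖) ⟨0, Finset.mem_range.2 (Nat.succ_pos _)⟩
  refine ⟨max ‖PowerSeries.coeff (R := K) b f‖ 1, lt_of_lt_of_le one_pos (le_max_right _ _), fun k => ?_⟩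
  by_cases hk : k < N + 1
  · exact le_trans (hbmax k (Finset.mem_range.2 hk)) (le_max_left _ _)
  · exact le_trans (le_of_lt (hN k (le_trans (Nat.le_succ N) (le_of_not_gt hk)))) (le_max_right _ _)

private lemma TT.add {f g : PowerSeries K} (hf : TT f) (hg : TT g) : TT (f + g) := by
  refine squeeze_zero (fun n => norm_nonneg _) (fun n => ?_) (by simpa using Filter.Tendsto.add hf hg)
  rw [map_add]
  exact norm_add_le _ _

private lemma TT.sub {f g : PowerSeries K} (hf : TT f) (hg : TT g) : TT (f - g) := by
  refine squeeze_zero (fun n => norm_nonneg _) (fun n => ?_) (by simpa using Filter.Tendsto.add hf hg)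
  rw [map_sub]
  exact norm_sub_le _ _

private lemma TT.of_support {f : PowerSeries K} {N : ℕ}
    (h : ∀ k, N ≤ k → PowerSeries.coeff (R := K) k f = 0) : TT f := by
  refine Tendsto.congr' ?_ tendsto_const_nhds
  filter_upwards [eventually_ge_atTop N] with k hk
  rw [h k hk, norm_zero]

private lemma mul_coeff_bound {f g : PowerSeries K} {Bf Bg : ℝ} (hBf : 0 ≤ Bf) (hBg : 0 ≤ Bg)
    (hf : ∀ k, ‖PowerSeries.coeff (R := K) k f‖ ≤ Bf) (hg : ∀ k, ‖PowerSeries.coeff (R := K) k g‖ ≤ Bg)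
    (n : ℕ) : ‖PowerSeries.coeff (R := K) n (f * g)‖ ≤ Bf * Bg := by
  rw [PowerSeries.coeff_mul]
  refine IsUltrametricDist.norm_sum_le_of_forall_le_of_nonneg (mul_nonneg hBf hBg) ?_
  intro p _
  rw [norm_mul]
  exact mul_le_mul (hf _) (hg _) (norm_nonneg _) hBf

private lemma TT.mul {f g : PowerSeries K} (hf : TT f) (hg : TT g) : TT (f * g) := by
  obtain ⟨Bf, hBf, hf'⟩ := hf.bound
  obtain ⟨Bg, hBg, hg'⟩ := hg.bound
  have hB : 0 < max Bf Bg := lt_of_lt_of_le hBf (le_max_left _ _)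
  rw [TT, Metric.tendsto_atTop]
  intro ε hε
  have hε' : 0 < ε / (2 * max Bf Bg) := div_pos hε (by linarith)
  obtain ⟨Nf, hNf⟩ := tendsto_norm_lt hf (fun k => norm_nonneg _) hε'
  obtain ⟨Ng, hNg⟩ := tendsto_norm_lt hg (fun k => norm_nonneg _) hε'
  refine ⟨Nf + Ng, fun n hn => ?_⟩
  rw [Real.dist_eq, sub_zero, abs_of_nonneg (norm_nonneg _)]
  have key : ‖PowerSeries.coeff (R := K) n (f * g)‖ ≤ ε / 2 := by
    rw [PowerSeries.coeff_mul]
    refine IsUltrametricDist.norm_sum_le_of_forall_le_of_nonneg (by linarith) ?_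
    intro p hp
    have hpn : p.1 + p.2 = n := Finset.HasAntidiagonal.mem_antidiagonal.1 hp
    rw [norm_mul]
    rcases le_or_gt Nf p.1 with h1 | h1
    · calc ‖PowerSeries.coeff (R := K) p.1 f‖ * ‖PowerSeries.coeff (R := K) p.2 g‖
          ≤ (ε / (2 * max Bf Bg)) * max Bf Bg := by
            refine mul_le_mul (le_of_lt (hNf _ h1)) (le_trans (hg' _) (le_max_right _ _))
              (norm_nonneg _) (le_of_lt hε')
        _ = ε / 2 := by field_simp
    · have h2 : Ng ≤ p.2 := by omega
      calc ‖PowerSeries.coeff (R := K) p.1 f‖ * ‖PowerSeries.coeff (R := K) p.2 g‖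
          ≤ max Bf Bg * (ε / (2 * max Bf Bg)) := by
            refine mul_le_mul (le_trans (hf' _) (le_max_left _ _)) (le_of_lt (hNg _ h2))
              (norm_nonneg _) (le_of_lt hB)
        _ = ε / 2 := by field_simp
  linarith

private lemma norm_add_eq_of_lt {x y : K} (h : ‖y‖ < ‖x‖) : ‖x + y‖ = ‖x‖ := by
  have h1 := IsUltrametricDist.norm_add_le_max x y
  have h2 := IsUltrametricDist.norm_add_le_max (x + y) (-y)
  rw [add_neg_cancel_right, norm_neg] at h2
  rcases max_cases ‖x + y‖ ‖y‖ with ⟨he, _⟩ | ⟨he, _⟩ <;>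
    rcases max_cases ‖x‖ ‖y‖ with ⟨hf, _⟩ | ⟨hf, _⟩ <;>
      rw [he] at h2 <;> rw [hf] at h1 <;> linarith

private lemma norm_sub_le_max' (x y : K) : ‖x - y‖ ≤ max ‖x‖ ‖y‖ := by
  rw [sub_eq_add_neg]
  simpa using IsUltrametricDist.norm_add_le_max x (-y)

private lemma coeff_mul_monomial' (A : PowerSeries K) (n m : ℕ) (t : K) :
    PowerSeries.coeff (R := K) m (A * PowerSeries.monomial (R := K) n t) =
      if n ≤ m then PowerSeries.coeff (R := K) (m - n) A * t else 0 := by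
  by_cases h : n ≤ m
  · rw [if_pos h, PowerSeries.coeff_mul, Finset.sum_eq_single ((m - n, n) : ℕ × ℕ)]
    · rw [PowerSeries.coeff_monomial, if_pos rfl]
    · rintro ⟨i, j⟩ hmem hne
      rw [Finset.HasAntidiagonal.mem_antidiagonal] at hmem
      rw [PowerSeries.coeff_monomial, if_neg, mul_zero]
      intro hj
      apply hne
      have hj' : j = n := hj
      have hi : i = m - n := by omega
      rw [Prod.mk.injEq]
      exact ⟨hi, hj'⟩
    · intro habs
      exact absurd (Finset.HasAntidiagonal.mem_antidiagonal.2 (by omega)) habs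
  · rw [if_neg h, PowerSeries.coeff_mul]
    apply Finset.sum_eq_zero
    rintro ⟨i, j⟩ hmem
    rw [Finset.HasAntidiagonal.mem_antidiagonal] at hmem
    rw [PowerSeries.coeff_monomial, if_neg, mul_zero]
    omega

private lemma key_coeff {a : PowerSeries K} {d : ℕ}
    (hM : 0 < ‖PowerSeries.coeff (R := K) d a‖)
    (hd1 : ∀ k, ‖PowerSeries.coeff (R := K) k a‖ ≤ ‖PowerSeries.coeff (R := K) d a‖)
    (hd2 : ∀ k, d < k → ‖PowerSeries.coeff (R := K) k a‖ < ‖PowerSeries.coeff (R := K) d a‖)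
    {q : PowerSeries K} (hq : TT q) (hq0 : q ≠ 0) :
    ∃ p, 0 < ‖PowerSeries.coeff (R := K) p q‖ ∧
      ‖PowerSeries.coeff (R := K) (d + p) (a * q)‖ =
        ‖PowerSeries.coeff (R := K) d a‖ * ‖PowerSeries.coeff (R := K) p q‖ := by
  have hqne : ∃ m, ‖PowerSeries.coeff (R := K) m q‖ ≠ 0 := by
    by_contra h
    push_neg at h
    apply hq0
    ext n
    rw [map_zero]
    exact norm_eq_zero.1 (h n)
  obtain ⟨p, hp0, hpmax, hplast⟩ := last_argmax (fun k => norm_nonneg _) hq hqne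
  refine ⟨p, hp0, ?_⟩
  have hsplit : ((d, p) : ℕ × ℕ) ∈ Finset.HasAntidiagonal.antidiagonal (d + p) :=
    Finset.HasAntidiagonal.mem_antidiagonal.2 rfl
  rw [PowerSeries.coeff_mul, ← Finset.add_sum_erase _ _ hsplit]
  have hS : ‖∑ x ∈ (Finset.HasAntidiagonal.antidiagonal (d + p)).erase (d, p),
      PowerSeries.coeff (R := K) x.1 a * PowerSeries.coeff (R := K) x.2 q‖ <
      ‖PowerSeries.coeff (R := K) d a‖ * ‖PowerSeries.coeff (R := K) p q‖ := by
    rcases Finset.eq_empty_or_nonempty ((Finset.HasAntidiagonal.antidiagonal (d + p)).erase (d, p)) with he | hne'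
    · rw [he, Finset.sum_empty, norm_zero]
      exact mul_pos hM hp0
    · obtain ⟨i, hi, hle⟩ := IsUltrametricDist.exists_norm_finset_sum_le_of_nonempty hne'
        (fun x : ℕ × ℕ => PowerSeries.coeff (R := K) x.1 a * PowerSeries.coeff (R := K) x.2 q)
      refine lt_of_le_of_lt hle ?_
      rw [norm_mul]
      have hi1 : i ≠ (d, p) := (Finset.mem_erase.1 hi).1
      have hi2 : i.1 + i.2 = d + p := Finset.HasAntidiagonal.mem_antidiagonal.1 (Finset.mem_erase.1 hi).2
      have hcase : d < i.1 ∨ p < i.2 := by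
        by_contra hcon
        push_neg at hcon
        apply hi1
        have h1 : i.1 = d := by omega
        have h2 : i.2 = p := by omega
        have : i = (i.1, i.2) := rfl
        rw [this, h1, h2]
      rcases hcase with h | h
      · calc ‖PowerSeries.coeff (R := K) i.1 a‖ * ‖PowerSeries.coeff (R := K) i.2 q‖
            ≤ ‖PowerSeries.coeff (R := K) i.1 a‖ * ‖PowerSeries.coeff (R := K) p q‖ :=
              mul_le_mul_of_nonneg_left (hpmax i.2) (norm_nonneg _)
          _ < ‖PowerSeries.coeff (R := K) d a‖ * ‖PowerSeries.coeff (R := K) p q‖ :=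
              mul_lt_mul_of_pos_right (hd2 i.1 h) hp0
      · calc ‖PowerSeries.coeff (R := K) i.1 a‖ * ‖PowerSeries.coeff (R := K) i.2 q‖
            ≤ ‖PowerSeries.coeff (R := K) d a‖ * ‖PowerSeries.coeff (R := K) i.2 q‖ :=
              mul_le_mul_of_nonneg_right (hd1 i.1) (norm_nonneg _)
          _ < ‖PowerSeries.coeff (R := K) d a‖ * ‖PowerSeries.coeff (R := K) p q‖ :=
              mul_lt_mul_of_pos_left (hplast i.2 h) hM
  rw [← norm_mul] at hS
  rw [norm_add_eq_of_lt hS, norm_mul]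

set_option maxHeartbeats 1000000 in
private theorem exists_division [CompleteSpace K] {a : PowerSeries K} {d : ℕ}
    (hM : 0 < ‖PowerSeries.coeff (R := K) d a‖)
    (hd1 : ∀ k, ‖PowerSeries.coeff (R := K) k a‖ ≤ ‖PowerSeries.coeff (R := K) d a‖)
    (hTa : TT a)
    {c : ℝ} (hc0 : 0 ≤ c) (hcM : c < ‖PowerSeries.coeff (R := K) d a‖)
    (hch : ∀ k, d < k → ‖PowerSeries.coeff (R := K) k a‖ ≤ c)
    {f : PowerSeries K} (hf : TT f) :
    ∃ Q R : PowerSeries K, TT Q ∧ (∀ k, d ≤ k → PowerSeries.coeff (R := K) k R = 0) ∧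
      f = a * Q + R := by
  have had : PowerSeries.coeff (R := K) d a ≠ 0 := by
    intro h
    rw [h, norm_zero] at hM
    exact lt_irrefl _ hM
  set δ : ℝ := max (c / ‖PowerSeries.coeff (R := K) d a‖) (1 / 2) with hδdef
  have hδ0 : 0 < δ := lt_of_lt_of_le one_half_pos (le_max_right _ _)
  have hδ1 : δ < 1 := max_lt (by rw [div_lt_one hM]; exact hcM) one_half_lt_one
  have hcδ : c ≤ δ * ‖PowerSeries.coeff (R := K) d a‖ := by
    have h := le_max_left (c / ‖PowerSeries.coeff (R := K) d a‖) (1 / 2)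
    calc c = c / ‖PowerSeries.coeff (R := K) d a‖ * ‖PowerSeries.coeff (R := K) d a‖ := by field_simp
      _ ≤ δ * ‖PowerSeries.coeff (R := K) d a‖ := mul_le_mul_of_nonneg_right h hM.le
  set A : PowerSeries K :=
    PowerSeries.mk (fun k => if k ≤ d then PowerSeries.coeff (R := K) k a else 0) with hAdef
  have hAco : ∀ k, PowerSeries.coeff (R := K) k A =
      if k ≤ d then PowerSeries.coeff (R := K) k a else 0 := fun k => PowerSeries.coeff_mk _ _
  have hAbd : ∀ k, ‖PowerSeries.coeff (R := K) k A‖ ≤ ‖PowerSeries.coeff (R := K) d a‖ := by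
    intro k
    rw [hAco]
    split
    · exact hd1 k
    · rw [norm_zero]; exact hM.le
  have haA : ∀ k, ‖PowerSeries.coeff (R := K) k (a - A)‖ ≤ c := by
    intro k
    rw [map_sub, hAco]
    by_cases hk : k ≤ d
    · rw [if_pos hk, sub_self, norm_zero]; exact hc0
    · rw [if_neg hk, sub_zero]; exact hch k (by omega)
  -- exact division by the polynomial part A
  have PD : ∀ n : ℕ, ∀ B : ℝ, 0 ≤ B → ∀ F : PowerSeries K,
      (∀ k, d + n ≤ k → PowerSeries.coeff (R := K) k F = 0) →
      (∀ k, ‖PowerSeries.coeff (R := K) k F‖ ≤ B) →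
      ∃ q r : PowerSeries K, F = A * q + r ∧
        (∀ k, ‖PowerSeries.coeff (R := K) k q‖ ≤ B / ‖PowerSeries.coeff (R := K) d a‖) ∧
        (∀ k, n ≤ k → PowerSeries.coeff (R := K) k q = 0) ∧
        (∀ k, ‖PowerSeries.coeff (R := K) k r‖ ≤ B) ∧
        (∀ k, d ≤ k → PowerSeries.coeff (R := K) k r = 0) := by
    intro n
    induction n with
    | zero =>
      intro B hB F hsupp hbd
      refine ⟨0, F, by ring, fun k => ?_, fun k _ => map_zero _, hbd,
        fun k hk => hsupp k (by omega)⟩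
      rw [map_zero, norm_zero]
      exact div_nonneg hB hM.le
    | succ n ih =>
      intro B hB F hsupp hbd
      set t : K := PowerSeries.coeff (R := K) (d + n) F / PowerSeries.coeff (R := K) d a with htdef
      have ht : ‖t‖ ≤ B / ‖PowerSeries.coeff (R := K) d a‖ := by
        rw [htdef, norm_div]
        exact (div_le_div_iff_of_pos_right hM).2 (hbd _)
      set F' : PowerSeries K := F - A * PowerSeries.monomial (R := K) n t with hF'def
      have hF'co : ∀ k, PowerSeries.coeff (R := K) k F' = PowerSeries.coeff (R := K) k F -
          (if n ≤ k then PowerSeries.coeff (R := K) (k - n) A * t else 0) := by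
        intro k
        rw [hF'def, map_sub, coeff_mul_monomial']
      have hF'supp : ∀ k, d + n ≤ k → PowerSeries.coeff (R := K) k F' = 0 := by
        intro k hk
        rcases eq_or_lt_of_le hk with he | hlt
        · rw [hF'co, if_pos (by omega)]
          have hkn : k - n = d := by omega
          rw [hkn, hAco, if_pos le_rfl, ← he, htdef, mul_comm, div_mul_cancel₀ _ had, sub_self]
        · rw [hF'co, hsupp k (by omega)]
          split
          · rw [hAco, if_neg (by omega), zero_mul, sub_zero]
          · rw [sub_zero]
      have hF'bd : ∀ k, ‖PowerSeries.coeff (R := K) k F'‖ ≤ B := by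
        intro k
        rw [hF'co]
        refine le_trans (norm_sub_le_max' _ _) (max_le (hbd k) ?_)
        split
        · rw [norm_mul]
          calc ‖PowerSeries.coeff (R := K) (k - n) A‖ * ‖t‖
              ≤ ‖PowerSeries.coeff (R := K) d a‖ * (B / ‖PowerSeries.coeff (R := K) d a‖) :=
                mul_le_mul (hAbd _) ht (norm_nonneg _) hM.le
            _ = B := by field_simp
        · rw [norm_zero]; exact hB
      obtain ⟨q', r', hq'eq, hq'bd, hq'supp, hr'bd, hr'supp⟩ := ih B hB F' hF'supp hF'bd
      refine ⟨q' + PowerSeries.monomial (R := K) n t, r', ?_, ?_, ?_, hr'bd, hr'supp⟩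
      · calc F = F' + A * PowerSeries.monomial (R := K) n t := by rw [hF'def]; ring
          _ = A * q' + r' + A * PowerSeries.monomial (R := K) n t := by rw [hq'eq]
          _ = A * (q' + PowerSeries.monomial (R := K) n t) + r' := by ring
      · intro k
        rw [map_add]
        refine le_trans (IsUltrametricDist.norm_add_le_max _ _) (max_le (hq'bd k) ?_)
        rw [PowerSeries.coeff_monomial]
        split
        · exact ht
        · rw [norm_zero]
          exact div_nonneg hB hM.le
      · intro k hk
        rw [map_add, hq'supp k (by omega), PowerSeries.coeff_monomial, if_neg (by omega),
          add_zero]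
  -- one approximate division step
  have step : ∀ g : PowerSeries K, ∀ B : ℝ, ∃ q r : PowerSeries K,
      (TT g ∧ 0 ≤ B ∧ ∀ k, ‖PowerSeries.coeff (R := K) k g‖ ≤ B) →
      ((∃ N, ∀ k, N ≤ k → PowerSeries.coeff (R := K) k q = 0) ∧
       (∀ k, ‖PowerSeries.coeff (R := K) k q‖ ≤ B / ‖PowerSeries.coeff (R := K) d a‖) ∧
       (∀ k, ‖PowerSeries.coeff (R := K) k r‖ ≤ B) ∧
       (∀ k, d ≤ k → PowerSeries.coeff (R := K) k r = 0) ∧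
       TT (g - (a * q + r)) ∧
       (∀ k, ‖PowerSeries.coeff (R := K) k (g - (a * q + r))‖ ≤ δ * B)) := by
    intro g B
    by_cases hyp : TT g ∧ 0 ≤ B ∧ ∀ k, ‖PowerSeries.coeff (R := K) k g‖ ≤ B
    swap
    · exact ⟨0, 0, fun h => absurd h hyp⟩
    obtain ⟨hg, hB, hgB⟩ := hyp
    rcases eq_or_lt_of_le hB with hB0 | hBpos
    · refine ⟨0, 0, fun _ => ?_⟩
      have hg0 : ∀ k, PowerSeries.coeff (R := K) k g = 0 := by
        intro k
        have h1 := hgB k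
        rw [← hB0] at h1
        exact norm_eq_zero.1 (le_antisymm h1 (norm_nonneg _))
      have hgz : g - (a * 0 + 0) = g := by ring
      refine ⟨⟨0, fun k _ => map_zero _⟩, fun k => ?_, fun k => ?_, fun k _ => map_zero _, ?_, ?_⟩
      · rw [map_zero, norm_zero]
        exact div_nonneg hB hM.le
      · rw [map_zero, norm_zero]; exact hB
      · rw [hgz]; exact hg
      · intro k
        rw [hgz, hg0 k, norm_zero]
        exact mul_nonneg hδ0.le hB
    · have hδB : 0 < δ * B := mul_pos hδ0 hBpos
      obtain ⟨N₁, hN₁⟩ := tendsto_norm_lt hg (fun k => norm_nonneg _) hδB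
      set F : PowerSeries K :=
        PowerSeries.mk (fun k => if k < N₁ then PowerSeries.coeff (R := K) k g else 0) with hFdef
      have hFco : ∀ k, PowerSeries.coeff (R := K) k F =
          if k < N₁ then PowerSeries.coeff (R := K) k g else 0 := fun k => PowerSeries.coeff_mk _ _
      have hFsupp : ∀ k, d + N₁ ≤ k → PowerSeries.coeff (R := K) k F = 0 := by
        intro k hk
        rw [hFco, if_neg (by omega)]
      have hFbd : ∀ k, ‖PowerSeries.coeff (R := K) k F‖ ≤ B := by
        intro k
        rw [hFco]
        split
        · exact hgB k
        · rw [norm_zero]; exact hB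
      obtain ⟨q, r, hqeq, hqbd, hqsupp, hrbd, hrsupp⟩ := PD N₁ B hB F hFsupp hFbd
      have hkey : g - (a * q + r) = (g - F) - (a - A) * q := by
        rw [hqeq]; ring
      have hgFbd : ∀ k, ‖PowerSeries.coeff (R := K) k (g - F)‖ ≤ δ * B := by
        intro k
        rw [map_sub, hFco]
        split
        · rw [sub_self, norm_zero]; exact hδB.le
        · rw [sub_zero]
          exact (hN₁ k (by omega)).le
      have hAq : ∀ k, ‖PowerSeries.coeff (R := K) k ((a - A) * q)‖ ≤ δ * B := by
        intro k
        refine le_trans (mul_coeff_bound hc0 (div_nonneg hB hM.le) haA hqbd k) ?_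
        calc c * (B / ‖PowerSeries.coeff (R := K) d a‖)
            ≤ (δ * ‖PowerSeries.coeff (R := K) d a‖) * (B / ‖PowerSeries.coeff (R := K) d a‖) :=
              mul_le_mul_of_nonneg_right hcδ (div_nonneg hB hM.le)
          _ = δ * B := by field_simp
      have herr : ∀ k, ‖PowerSeries.coeff (R := K) k (g - (a * q + r))‖ ≤ δ * B := by
        intro k
        rw [hkey, map_sub]
        exact le_trans (norm_sub_le_max' _ _) (max_le (hgFbd k) (hAq k))
      have hTq : TT q := TT.of_support hqsupp
      have hTr : TT r := TT.of_support hrsupp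
      exact ⟨q, r, fun _ => ⟨⟨N₁, hqsupp⟩, hqbd, hrbd, hrsupp,
        TT.sub hg (TT.add (TT.mul hTa hTq) hTr), herr⟩⟩
  -- iterate the approximate division
  choose qf rf hstep using step
  obtain ⟨B₀, hB₀, hfB⟩ := TT.bound hf
  set rem : ℕ → PowerSeries K := fun m =>
    Nat.rec f (fun m g => g - (a * qf g (δ ^ m * B₀) + rf g (δ ^ m * B₀))) m with hremdef
  have hrem0 : rem 0 = f := rfl
  have hremS : ∀ m, rem (m + 1) =
      rem m - (a * qf (rem m) (δ ^ m * B₀) + rf (rem m) (δ ^ m * B₀)) := fun m => rfl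
  have hinv : ∀ m, TT (rem m) ∧ ∀ k, ‖PowerSeries.coeff (R := K) k (rem m)‖ ≤ δ ^ m * B₀ := by
    intro m
    induction m with
    | zero =>
      refine ⟨hf, fun k => ?_⟩
      rw [pow_zero, one_mul]
      exact hfB k
    | succ m ihm =>
      obtain ⟨hT, hbd⟩ := ihm
      have h := hstep (rem m) (δ ^ m * B₀) ⟨hT, by positivity, hbd⟩
      refine ⟨by rw [hremS]; exact h.2.2.2.2.1, fun k => ?_⟩
      rw [hremS]
      calc ‖PowerSeries.coeff (R := K) k (rem m - (a * qf (rem m) (δ ^ m * B₀) +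
              rf (rem m) (δ ^ m * B₀)))‖
          ≤ δ * (δ ^ m * B₀) := h.2.2.2.2.2 k
        _ = δ ^ (m + 1) * B₀ := by ring
  set q : ℕ → PowerSeries K := fun m => qf (rem m) (δ ^ m * B₀) with hqdef
  set r : ℕ → PowerSeries K := fun m => rf (rem m) (δ ^ m * B₀) with hrdef
  have hprop : ∀ m, (∃ N, ∀ k, N ≤ k → PowerSeries.coeff (R := K) k (q m) = 0) ∧
      (∀ k, ‖PowerSeries.coeff (R := K) k (q m)‖ ≤ (δ ^ m * B₀) / ‖PowerSeries.coeff (R := K) d a‖) ∧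
      (∀ k, ‖PowerSeries.coeff (R := K) k (r m)‖ ≤ δ ^ m * B₀) ∧
      (∀ k, d ≤ k → PowerSeries.coeff (R := K) k (r m) = 0) := by
    intro m
    obtain ⟨hT, hbd⟩ := hinv m
    have h := hstep (rem m) (δ ^ m * B₀) ⟨hT, by positivity, hbd⟩
    exact ⟨h.1, h.2.1, h.2.2.1, h.2.2.2.1⟩
  have hqsupp : ∀ m, ∃ N, ∀ k, N ≤ k → PowerSeries.coeff (R := K) k (q m) = 0 :=
    fun m => (hprop m).1
  have hqbd : ∀ m k, ‖PowerSeries.coeff (R := K) k (q m)‖ ≤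
      (δ ^ m * B₀) / ‖PowerSeries.coeff (R := K) d a‖ := fun m => (hprop m).2.1
  have hrbd : ∀ m k, ‖PowerSeries.coeff (R := K) k (r m)‖ ≤ δ ^ m * B₀ := fun m => (hprop m).2.2.1
  have hrsupp : ∀ m k, d ≤ k → PowerSeries.coeff (R := K) k (r m) = 0 := fun m => (hprop m).2.2.2
  have hremS' : ∀ m, rem (m + 1) = rem m - (a * q m + r m) := fun m => rfl
  choose Nq hNq using hqsupp
  have hpsum : ∀ n, f - ∑ m ∈ Finset.range n, (a * q m + r m) = rem n := by
    intro n
    induction n with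
    | zero => simp [hrem0]
    | succ n ihn =>
      rw [Finset.sum_range_succ, hremS', ← ihn]
      ring
  have hqbd' : ∀ m k, ‖PowerSeries.coeff (R := K) k (q m)‖ ≤
      (B₀ / ‖PowerSeries.coeff (R := K) d a‖) * δ ^ m := by
    intro m k
    calc ‖PowerSeries.coeff (R := K) k (q m)‖ ≤ (δ ^ m * B₀) / ‖PowerSeries.coeff (R := K) d a‖ := hqbd m k
      _ = (B₀ / ‖PowerSeries.coeff (R := K) d a‖) * δ ^ m := by ring
  have hgeoQ : Summable (fun m : ℕ => (B₀ / ‖PowerSeries.coeff (R := K) d a‖) * δ ^ m) :=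
    (summable_geometric_of_lt_one hδ0.le hδ1).mul_left _
  have hQnormsum : ∀ k, Summable (fun m => ‖PowerSeries.coeff (R := K) k (q m)‖) := fun k =>
    Summable.of_nonneg_of_le (fun m => norm_nonneg _) (fun m => hqbd' m k) hgeoQ
  have hQsum : ∀ k, Summable (fun m => PowerSeries.coeff (R := K) k (q m)) := fun k =>
    Summable.of_norm (hQnormsum k)
  have hRnormsum : ∀ k, Summable (fun m => ‖PowerSeries.coeff (R := K) k (r m)‖) := by
    intro k
    refine Summable.of_nonneg_of_le (fun m => norm_nonneg _) (fun m => ?_)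
      ((summable_geometric_of_lt_one hδ0.le hδ1).mul_left B₀)
    calc ‖PowerSeries.coeff (R := K) k (r m)‖ ≤ δ ^ m * B₀ := hrbd m k
      _ = B₀ * δ ^ m := by ring
  have hRsum : ∀ k, Summable (fun m => PowerSeries.coeff (R := K) k (r m)) := fun k =>
    Summable.of_norm (hRnormsum k)
  set Q : PowerSeries K := PowerSeries.mk (fun k => ∑' m, PowerSeries.coeff (R := K) k (q m))
    with hQdef
  set R : PowerSeries K := PowerSeries.mk (fun k => ∑' m, PowerSeries.coeff (R := K) k (r m))
    with hRdef
  have hRsupp : ∀ k, d ≤ k → PowerSeries.coeff (R := K) k R = 0 := by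
    intro k hk
    rw [hRdef, PowerSeries.coeff_mk]
    have h1 : (fun m => PowerSeries.coeff (R := K) k (r m)) = fun _ => (0 : K) :=
      funext fun m => hrsupp m k hk
    rw [h1, tsum_zero]
  have hTQ : TT Q := by
    rw [TT, Metric.tendsto_atTop]
    intro ε hε
    have htail : Tendsto (fun m₀ : ℕ =>
        (B₀ / ‖PowerSeries.coeff (R := K) d a‖) * δ ^ m₀ * (1 - δ)⁻¹) atTop (nhds 0) := by
      have h1 := tendsto_pow_atTop_nhds_zero_of_lt_one hδ0.le hδ1
      have h2 := (h1.const_mul (B₀ / ‖PowerSeries.coeff (R := K) d a‖)).mul_const (1 - δ)⁻¹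
      simpa using h2
    obtain ⟨m₀, hm₀⟩ := tendsto_norm_lt htail (fun m₀ => mul_nonneg (mul_nonneg
      (div_nonneg hB₀.le (norm_nonneg _)) (pow_nonneg hδ0.le _)) (inv_nonneg.2 (by linarith))) hε
    have hm₀' : (B₀ / ‖PowerSeries.coeff (R := K) d a‖) * δ ^ m₀ * (1 - δ)⁻¹ < ε := hm₀ m₀ le_rfl
    set Nstar := (Finset.range m₀).sup Nq with hNstar
    refine ⟨Nstar, fun k hk => ?_⟩
    rw [Real.dist_eq, sub_zero, abs_of_nonneg (norm_nonneg _)]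
    rw [hQdef, PowerSeries.coeff_mk]
    have h1 : ‖∑' m, PowerSeries.coeff (R := K) k (q m)‖ ≤ ∑' m, ‖PowerSeries.coeff (R := K) k (q m)‖ :=
      norm_tsum_le_tsum_norm (hQnormsum k)
    have h2 := Summable.sum_add_tsum_nat_add (f := fun m => ‖PowerSeries.coeff (R := K) k (q m)‖) m₀
      (hQnormsum k)
    have h3 : ∑ m ∈ Finset.range m₀, ‖PowerSeries.coeff (R := K) k (q m)‖ = 0 := by
      refine Finset.sum_eq_zero fun m hm => ?_
      rw [hNq m k (le_trans (Finset.le_sup hm) hk), norm_zero]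
    have h4 : ∑' m, ‖PowerSeries.coeff (R := K) k (q (m + m₀))‖ ≤
        (B₀ / ‖PowerSeries.coeff (R := K) d a‖) * δ ^ m₀ * (1 - δ)⁻¹ := by
      have hs1 : Summable (fun m => ‖PowerSeries.coeff (R := K) k (q (m + m₀))‖) :=
        (summable_nat_add_iff m₀).2 (hQnormsum k)
      have hs2 : Summable (fun m : ℕ =>
          ((B₀ / ‖PowerSeries.coeff (R := K) d a‖) * δ ^ m₀) * δ ^ m) :=
        (summable_geometric_of_lt_one hδ0.le hδ1).mul_left _
      have hle : ∀ m, ‖PowerSeries.coeff (R := K) k (q (m + m₀))‖ ≤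
          ((B₀ / ‖PowerSeries.coeff (R := K) d a‖) * δ ^ m₀) * δ ^ m := by
        intro m
        calc ‖PowerSeries.coeff (R := K) k (q (m + m₀))‖
            ≤ (B₀ / ‖PowerSeries.coeff (R := K) d a‖) * δ ^ (m + m₀) := hqbd' (m + m₀) k
          _ = ((B₀ / ‖PowerSeries.coeff (R := K) d a‖) * δ ^ m₀) * δ ^ m := by
              rw [pow_add]; ring
      calc ∑' m, ‖PowerSeries.coeff (R := K) k (q (m + m₀))‖
          ≤ ∑' m, ((B₀ / ‖PowerSeries.coeff (R := K) d a‖) * δ ^ m₀) * δ ^ m :=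
            Summable.tsum_le_tsum hle hs1 hs2
        _ = ((B₀ / ‖PowerSeries.coeff (R := K) d a‖) * δ ^ m₀) * ∑' m, δ ^ m := tsum_mul_left
        _ = (B₀ / ‖PowerSeries.coeff (R := K) d a‖) * δ ^ m₀ * (1 - δ)⁻¹ := by
            rw [tsum_geometric_of_lt_one hδ0.le hδ1]
    calc ‖∑' m, PowerSeries.coeff (R := K) k (q m)‖
        ≤ ∑' m, ‖PowerSeries.coeff (R := K) k (q m)‖ := h1
      _ = ∑ m ∈ Finset.range m₀, ‖PowerSeries.coeff (R := K) k (q m)‖ +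
          ∑' m, ‖PowerSeries.coeff (R := K) k (q (m + m₀))‖ := h2.symm
      _ = ∑' m, ‖PowerSeries.coeff (R := K) k (q (m + m₀))‖ := by rw [h3, zero_add]
      _ ≤ (B₀ / ‖PowerSeries.coeff (R := K) d a‖) * δ ^ m₀ * (1 - δ)⁻¹ := h4
      _ < ε := hm₀'
  -- the sum identity
  have hsum_aq : ∀ k, Summable (fun m => PowerSeries.coeff (R := K) k (a * q m)) := by
    intro k
    refine Summable.of_norm (Summable.of_nonneg_of_le (fun m => norm_nonneg _) (fun m => ?_)
      ((summable_geometric_of_lt_one hδ0.le hδ1).mul_left B₀))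
    calc ‖PowerSeries.coeff (R := K) k (a * q m)‖
        ≤ ‖PowerSeries.coeff (R := K) d a‖ * ((δ ^ m * B₀) / ‖PowerSeries.coeff (R := K) d a‖) :=
          mul_coeff_bound hM.le (div_nonneg (by positivity) hM.le) hd1 (hqbd m) k
      _ = B₀ * δ ^ m := by
          rw [mul_comm, div_mul_cancel₀ _ (ne_of_gt hM)]; ring
  have hcoefQ : ∀ k, PowerSeries.coeff (R := K) k (a * Q) =
      ∑' m, PowerSeries.coeff (R := K) k (a * q m) := by
    intro k
    rw [PowerSeries.coeff_mul]
    have hterm : ∀ p ∈ Finset.HasAntidiagonal.antidiagonal k,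
        PowerSeries.coeff (R := K) p.1 a * PowerSeries.coeff (R := K) p.2 Q =
        ∑' m, PowerSeries.coeff (R := K) p.1 a * PowerSeries.coeff (R := K) p.2 (q m) := by
      intro p _
      rw [hQdef, PowerSeries.coeff_mk, ← tsum_mul_left]
    rw [Finset.sum_congr rfl hterm,
      ← Summable.tsum_finsetSum (fun p _ => (hQsum p.2).mul_left (PowerSeries.coeff (R := K) p.1 a))]
    exact tsum_congr fun m => (PowerSeries.coeff_mul k a (q m)).symm
  have hfinal : ∀ k, PowerSeries.coeff (R := K) k f = PowerSeries.coeff (R := K) k (a * Q + R) := by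
    intro k
    have hsumboth : Summable (fun m => PowerSeries.coeff (R := K) k (a * q m + r m)) := by
      have h := (hsum_aq k).add (hRsum k)
      refine h.congr fun m => ?_
      rw [map_add]
    have h0 : Tendsto (fun n => PowerSeries.coeff (R := K) k (rem n)) atTop (nhds 0) := by
      rw [tendsto_zero_iff_norm_tendsto_zero]
      refine squeeze_zero (fun n => norm_nonneg _) (fun n => (hinv n).2 k) ?_
      simpa using (tendsto_pow_atTop_nhds_zero_of_lt_one hδ0.le hδ1).mul_const B₀
    have hhas : HasSum (fun m => PowerSeries.coeff (R := K) k (a * q m + r m))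
        (PowerSeries.coeff (R := K) k f) := by
      rw [hsumboth.hasSum_iff_tendsto_nat]
      have heq : ∀ n, ∑ m ∈ Finset.range n, PowerSeries.coeff (R := K) k (a * q m + r m) =
          PowerSeries.coeff (R := K) k f - PowerSeries.coeff (R := K) k (rem n) := by
        intro n
        have h := congrArg (PowerSeries.coeff (R := K) k) (hpsum n)
        rw [map_sub, map_sum] at h
        linear_combination -h
      rw [funext heq]
      have := Tendsto.sub (tendsto_const_nhds
        (x := PowerSeries.coeff (R := K) k f) (f := atTop)) h0
      simpa using this
    calc PowerSeries.coeff (R := K) k f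
        = ∑' m, PowerSeries.coeff (R := K) k (a * q m + r m) := hhas.tsum_eq.symm
      _ = ∑' m, (PowerSeries.coeff (R := K) k (a * q m) + PowerSeries.coeff (R := K) k (r m)) :=
          tsum_congr fun m => by rw [map_add]
      _ = (∑' m, PowerSeries.coeff (R := K) k (a * q m)) + ∑' m, PowerSeries.coeff (R := K) k (r m) :=
          Summable.tsum_add (hsum_aq k) (hRsum k)
      _ = PowerSeries.coeff (R := K) k (a * Q) + PowerSeries.coeff (R := K) k R := by
          rw [hcoefQ k, hRdef, PowerSeries.coeff_mk]
      _ = PowerSeries.coeff (R := K) k (a * Q + R) := (map_add _ _ _).symm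
  exact ⟨Q, R, hTQ, hRsupp, PowerSeries.ext hfinal⟩

end TateAux

set_option maxHeartbeats 1000000 in
/-- Weierstrass division / index of multiplication in the Tate algebra: if `a` is a
nonzero element of `K⟨x⟩` with Weierstrass degree `d` (the largest index where the
Gauss norm is attained), then multiplication by `a` is injective on `K⟨x⟩` and the
quotient `K⟨x⟩/(a)` has `K`-dimension exactly `d`. -/
theorem tate_algebra_mul_index {K : Type*} [NontriviallyNormedField K]
    [CompleteSpace K] [IsUltrametricDist K]
    (V : Submodule K (PowerSeries K))
    (hV : ∀ f : PowerSeries K, f ∈ V ↔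
      Tendsto (fun n => ‖PowerSeries.coeff (R := K) n f‖) atTop (nhds 0))
    (a : PowerSeries K) (haV : a ∈ V) (ha0 : a ≠ 0)
    (d : ℕ)
    (hd1 : ∀ k, ‖PowerSeries.coeff (R := K) k a‖ ≤ ‖PowerSeries.coeff (R := K) d a‖)
    (hd2 : ∀ k, d < k → ‖PowerSeries.coeff (R := K) k a‖ < ‖PowerSeries.coeff (R := K) d a‖)
    (W : Submodule K V)
    (hW : ∀ g : V, g ∈ W ↔ ∃ f ∈ V, a * f = (g : PowerSeries K)) :
    Function.Injective (fun f : V => a * (f : PowerSeries K)) ∧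
    Module.finrank K (V ⧸ W) = d := by
  classical
  have hTa : TT a := (hV a).1 haV
  have hM : 0 < ‖PowerSeries.coeff (R := K) d a‖ := by
    rcases eq_or_lt_of_le (norm_nonneg (PowerSeries.coeff (R := K) d a)) with h | h
    · exfalso
      apply ha0
      ext n
      rw [map_zero]
      have h2 := hd1 n
      rw [← h] at h2
      exact norm_eq_zero.1 (le_antisymm h2 (norm_nonneg _))
    · exact h
  have hcex : ∃ c, 0 ≤ c ∧ c < ‖PowerSeries.coeff (R := K) d a‖ ∧
      ∀ k, d < k → ‖PowerSeries.coeff (R := K) k a‖ ≤ c := by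
    by_cases hz : ∀ k, d < k → PowerSeries.coeff (R := K) k a = 0
    · exact ⟨0, le_rfl, hM, fun k hk => by rw [hz k hk, norm_zero]⟩
    · push_neg at hz
      obtain ⟨k₀, hk₀d, hk₀⟩ := hz
      have hsh : Tendsto (fun n => ‖PowerSeries.coeff (R := K) (n + (d + 1)) a‖) atTop (nhds 0) :=
        hTa.comp (tendsto_add_atTop_nat (d + 1))
      obtain ⟨p, hp0, hpmax, _⟩ := last_argmax (fun k => norm_nonneg _) hsh ⟨k₀ - (d + 1), by
        have hkk : k₀ - (d + 1) + (d + 1) = k₀ := by omega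
        rw [hkk]
        exact fun hh => hk₀ (norm_eq_zero.1 hh)⟩
      refine ⟨‖PowerSeries.coeff (R := K) (p + (d + 1)) a‖, norm_nonneg _, hd2 _ (by omega), ?_⟩
      intro k hk
      have h2 := hpmax (k - (d + 1))
      have hkk : k - (d + 1) + (d + 1) = k := by omega
      rwa [hkk] at h2
  obtain ⟨c, hc0, hcM, hch⟩ := hcex
  have hinj : Function.Injective (fun f : V => a * (f : PowerSeries K)) := by
    intro x y hxy
    have h : a * (x : PowerSeries K) = a * (y : PowerSeries K) := hxy
    exact Subtype.ext (mul_left_cancel₀ ha0 h)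
  refine ⟨hinj, ?_⟩
  have hXi : ∀ i : ℕ, (PowerSeries.X : PowerSeries K) ^ i ∈ V := by
    intro i
    rw [hV]
    refine TT.of_support (N := i + 1) ?_
    intro k hk
    rw [PowerSeries.coeff_X_pow, if_neg (by omega)]
  set xe : Fin d → V := fun i => ⟨PowerSeries.X ^ (i : ℕ), hXi i⟩ with hxe
  set bvec : Fin d → (V ⧸ W) := fun i => W.mkQ (xe i) with hbvec
  have hli : LinearIndependent K bvec := by
    rw [linearIndependent_iff']
    intro s g hsum i hi
    have h0 : W.mkQ (∑ j ∈ s, g j • xe j) = 0 := by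
      rw [map_sum]
      simp_rw [map_smul]
      exact hsum
    rw [Submodule.mkQ_apply, Submodule.Quotient.mk_eq_zero] at h0
    obtain ⟨h, hhV, hah⟩ := (hW _).1 h0
    have hcoe : ((∑ j ∈ s, g j • xe j : V) : PowerSeries K) =
        ∑ j ∈ s, g j • ((PowerSeries.X : PowerSeries K) ^ (j : ℕ)) := by
      rw [hxe]
      push_cast
      rfl
    by_contra hgi
    have hP0 : ((∑ j ∈ s, g j • xe j : V) : PowerSeries K) ≠ 0 := by
      rw [hcoe]
      intro hzz
      apply hgi
      have h2 := congrArg (PowerSeries.coeff (R := K) (i : ℕ)) hzz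
      rw [map_zero, map_sum] at h2
      rw [Finset.sum_eq_single i] at h2
      · rw [LinearMap.map_smul, PowerSeries.coeff_X_pow, if_pos rfl, smul_eq_mul,
          mul_one] at h2
        exact h2
      · intro j hj hji
        rw [LinearMap.map_smul, PowerSeries.coeff_X_pow, if_neg, smul_zero]
        intro hij
        exact hji (Fin.ext (by omega))
      · intro his
        exact absurd hi his
    have hh0 : h ≠ 0 := by
      rintro rfl
      rw [mul_zero] at hah
      exact hP0 hah.symm
    have hTh : TT h := (hV h).1 hhV
    obtain ⟨p, hp0, hkey⟩ := key_coeff hM hd1 hd2 hTh hh0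
    have hz : PowerSeries.coeff (R := K) (d + p) (a * h) = 0 := by
      rw [hah, hcoe, map_sum]
      refine Finset.sum_eq_zero fun j hj => ?_
      rw [LinearMap.map_smul, PowerSeries.coeff_X_pow, if_neg (by omega), smul_zero]
    rw [hz, norm_zero] at hkey
    have hpos := mul_pos hM hp0
    rw [← hkey] at hpos
    exact lt_irrefl _ hpos
  have hspan : ⊤ ≤ Submodule.span K (Set.range bvec) := by
    rintro z -
    obtain ⟨gv, rfl⟩ := Submodule.mkQ_surjective W z
    have hTf : TT ((gv : PowerSeries K)) := (hV _).1 gv.2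
    obtain ⟨Q, R, hTQ, hRsupp, heq⟩ := exists_division hM hd1 hTa hc0 hcM hch hTf
    have hRV : R ∈ V := (hV R).2 (TT.of_support hRsupp)
    have hdiff : gv - ⟨R, hRV⟩ ∈ W := by
      refine (hW _).2 ⟨Q, (hV Q).2 hTQ, ?_⟩
      rw [AddSubgroupClass.coe_sub]
      show a * Q = (gv : PowerSeries K) - R
      rw [heq]
      ring
    have hmkeq : W.mkQ gv = W.mkQ ⟨R, hRV⟩ := by
      rw [Submodule.mkQ_apply, Submodule.mkQ_apply]
      exact (Submodule.Quotient.eq W).2 hdiff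
    rw [hmkeq]
    have hRrep : (⟨R, hRV⟩ : V) = ∑ i : Fin d, (PowerSeries.coeff (R := K) (i : ℕ) R) • xe i := by
      apply Subtype.ext
      have hco : ((∑ i : Fin d, (PowerSeries.coeff (R := K) (i : ℕ) R) • xe i : V) : PowerSeries K)
          = ∑ i : Fin d, (PowerSeries.coeff (R := K) (i : ℕ) R) •
            ((PowerSeries.X : PowerSeries K) ^ (i : ℕ)) := by
        rw [hxe]
        push_cast
        rfl
      rw [hco]
      ext k
      rw [map_sum]
      by_cases hk : k < d
      · rw [Finset.sum_eq_single (⟨k, hk⟩ : Fin d)]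
        · rw [LinearMap.map_smul, PowerSeries.coeff_X_pow, if_pos rfl, smul_eq_mul, mul_one]
        · intro j _ hji
          rw [LinearMap.map_smul, PowerSeries.coeff_X_pow, if_neg, smul_zero]
          intro hij
          exact hji (Fin.ext (by simp only [Fin.val_mk]; omega))
        · intro his
          exact absurd (Finset.mem_univ _) his
      · rw [hRsupp k (le_of_not_gt hk)]
        refine (Finset.sum_eq_zero fun j _ => ?_).symm
        rw [LinearMap.map_smul, PowerSeries.coeff_X_pow, if_neg, smul_zero]
        intro hij
        omega
    rw [hRrep, map_sum]
    refine Submodule.sum_mem _ fun i _ => ?_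
    rw [map_smul]
    exact Submodule.smul_mem _ _ (Submodule.subset_span ⟨i, rfl⟩)
  have hbasis : Module.Basis (Fin d) K (V ⧸ W) := Module.Basis.mk hli hspan
  rw [Module.finrank_eq_card_basis hbasis, Fintype.card_fin]
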